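/- For an r×r matrix B with entries in a commutative ring of formal power series, the inverse of det(I - B) equals the sum over all nonnegative-integer flows f on the complete directed graph on r vertices of β(f)·mult(f), where β(f) = ∏_e b_e^{f(e)} and mult(f) = ∏_v multinomial coefficient of the values of f on edges leaving v. -/

import Mathlib

open scoped Classical
open Finset

namespace FZ


variable {σ : Type*}

noncomputable def D (e : σ) : MvPowerSeries σ ℚ →ₗ[ℚ] MvPowerSeries σ ℚ where
  toFun φ := fun d => ((d e : ℚ) + 1) * φ (d + Finsupp.single e 1)
  map_add' φ ψ := by funext d; show ((d e : ℚ) + 1) * (φ (d + Finsupp.single e 1) + ψ (d + Finsupp.single e 1)) = ((d e : ℚ) + 1) * φ (d + Finsupp.single e 1) + ((d e : ℚ) + 1) * ψ (d + Finsupp.single e 1); ring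
  map_smul' c φ := by funext d; show ((d e : ℚ) + 1) * (c * φ (d + Finsupp.single e 1)) = c * (((d e : ℚ) + 1) * φ (d + Finsupp.single e 1)); ring

lemma D_apply (e : σ) (φ : MvPowerSeries σ ℚ) (d : σ →₀ ℕ) :
    D e φ d = ((d e : ℚ) + 1) * φ (d + Finsupp.single e 1) := rfl

private lemma shift_sum (e : σ) (d : σ →₀ ℕ) (F : (σ →₀ ℕ) × (σ →₀ ℕ) → ℚ) :
    ∑ p ∈ antidiagonal d, F (p.1 + Finsupp.single e 1, p.2)
      = ∑ q ∈ antidiagonal (d + Finsupp.single e 1) with q.1 e ≠ 0, F q := by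
  apply Finset.sum_nbij' (i := fun p : (σ →₀ ℕ) × (σ →₀ ℕ) => (p.1 + Finsupp.single e 1, p.2))
      (j := fun q : (σ →₀ ℕ) × (σ →₀ ℕ) => (q.1 - Finsupp.single e 1, q.2))
  · intro p hp
    rw [HasAntidiagonal.mem_antidiagonal] at hp
    rw [mem_filter, HasAntidiagonal.mem_antidiagonal]
    constructor
    · rw [add_right_comm, hp]
    · show ¬ ((p.1 + Finsupp.single e 1 : σ →₀ ℕ) e = 0)
      simp
  · intro q hq
    rw [mem_filter, HasAntidiagonal.mem_antidiagonal] at hq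
    obtain ⟨hq1, hq2⟩ := hq
    rw [HasAntidiagonal.mem_antidiagonal]
    have hle : Finsupp.single e 1 ≤ q.1 := by
      rw [Finsupp.single_le_iff]; omega
    have h := tsub_add_cancel_of_le hle
    have : q.1 - Finsupp.single e 1 + q.2 + Finsupp.single e 1 = d + Finsupp.single e 1 := by
      rw [add_right_comm, h, hq1]
    exact add_right_cancel this
  · intro p hp
    simp [Prod.ext_iff]
  · intro q hq
    rw [mem_filter, HasAntidiagonal.mem_antidiagonal] at hq
    have hle : Finsupp.single e 1 ≤ q.1 := by
      rw [Finsupp.single_le_iff]; omega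
    simp [Prod.ext_iff, tsub_add_cancel_of_le hle]
  · intro p hp; rfl

private lemma swap_antidiag (d : σ →₀ ℕ) (F : (σ →₀ ℕ) × (σ →₀ ℕ) → ℚ) :
    ∑ p ∈ antidiagonal d, F p = ∑ p ∈ antidiagonal d, F (p.2, p.1) := by
  apply Finset.sum_nbij' (i := fun p : (σ →₀ ℕ) × (σ →₀ ℕ) => (p.2, p.1))
      (j := fun p : (σ →₀ ℕ) × (σ →₀ ℕ) => (p.2, p.1)) <;>
    simp_all [HasAntidiagonal.mem_antidiagonal, add_comm]

lemma D_mul (e : σ) (φ ψ : MvPowerSeries σ ℚ) :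
    D e (φ * ψ) = D e φ * ψ + φ * D e ψ := by
  classical
  funext d
  show ((d e : ℚ) + 1) * (φ * ψ) (d + Finsupp.single e 1)
      = ((D e φ * ψ) + (φ * D e ψ)) d
  have h1 : (φ * ψ) (d + Finsupp.single e 1)
      = ∑ p ∈ antidiagonal (d + Finsupp.single e 1), φ p.1 * ψ p.2 :=
    MvPowerSeries.coeff_mul _ _ _
  have h2 : (D e φ * ψ) d = ∑ p ∈ antidiagonal d, (D e φ) p.1 * ψ p.2 :=
    MvPowerSeries.coeff_mul _ _ _
  have h3 : (φ * D e ψ) d = ∑ p ∈ antidiagonal d, φ p.1 * (D e ψ) p.2 :=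
    MvPowerSeries.coeff_mul _ _ _
  have hadd : ((D e φ * ψ) + (φ * D e ψ)) d = (D e φ * ψ) d + (φ * (D e ψ)) d := rfl
  rw [hadd, h1, h2, h3]
  have hcast : ∀ p : (σ →₀ ℕ) × (σ →₀ ℕ),
      (((p.1 + Finsupp.single e 1 : σ →₀ ℕ) e : ℚ)) = (p.1 e : ℚ) + 1 := by
    intro p; push_cast [Finsupp.add_apply, Finsupp.single_eq_same]; ring
  have k2 : ∑ p ∈ antidiagonal d, (D e φ) p.1 * ψ p.2
      = ∑ q ∈ antidiagonal (d + Finsupp.single e 1), ((q.1 : σ →₀ ℕ) e : ℚ) * (φ q.1 * ψ q.2) := by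
    have hstep := shift_sum e d (fun q => ((q.1 : σ →₀ ℕ) e : ℚ) * (φ q.1 * ψ q.2))
    have hfull : ∑ q ∈ antidiagonal (d + Finsupp.single e 1) with (q.1 : σ →₀ ℕ) e ≠ 0,
          ((q.1 : σ →₀ ℕ) e : ℚ) * (φ q.1 * ψ q.2)
        = ∑ q ∈ antidiagonal (d + Finsupp.single e 1), ((q.1 : σ →₀ ℕ) e : ℚ) * (φ q.1 * ψ q.2) :=
      Finset.sum_filter_of_ne (fun q _ hfq h0 => hfq (by simp [h0]))
    rw [← hfull, ← hstep]
    apply Finset.sum_congr rfl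
    intro p hp
    rw [D_apply]
    show _ = ((p.1 + Finsupp.single e 1 : σ →₀ ℕ) e : ℚ) * (φ (p.1 + Finsupp.single e 1) * ψ p.2)
    rw [hcast p]; ring
  have k3 : ∑ p ∈ antidiagonal d, φ p.1 * (D e ψ) p.2
      = ∑ q ∈ antidiagonal (d + Finsupp.single e 1), ((q.2 : σ →₀ ℕ) e : ℚ) * (φ q.1 * ψ q.2) := by
    rw [swap_antidiag d (fun p => φ p.1 * (D e ψ) p.2),
        swap_antidiag (d + Finsupp.single e 1) (fun q => ((q.2 : σ →₀ ℕ) e : ℚ) * (φ q.1 * ψ q.2))]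
    have hstep := shift_sum e d (fun q => ((q.1 : σ →₀ ℕ) e : ℚ) * (φ q.2 * ψ q.1))
    have hfull : ∑ q ∈ antidiagonal (d + Finsupp.single e 1) with (q.1 : σ →₀ ℕ) e ≠ 0,
          ((q.1 : σ →₀ ℕ) e : ℚ) * (φ q.2 * ψ q.1)
        = ∑ q ∈ antidiagonal (d + Finsupp.single e 1), ((q.1 : σ →₀ ℕ) e : ℚ) * (φ q.2 * ψ q.1) :=
      Finset.sum_filter_of_ne (fun q _ hfq h0 => hfq (by simp [h0]))
    show ∑ p ∈ antidiagonal d, φ p.2 * (D e ψ) p.1 = _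
    rw [← hfull, ← hstep]
    apply Finset.sum_congr rfl
    intro p hp
    rw [D_apply]
    show _ = ((p.1 + Finsupp.single e 1 : σ →₀ ℕ) e : ℚ) * (φ p.2 * ψ (p.1 + Finsupp.single e 1))
    rw [hcast p]; ring
  rw [k2, k3, ← Finset.sum_add_distrib, Finset.mul_sum]
  apply Finset.sum_congr rfl
  intro q hq
  rw [HasAntidiagonal.mem_antidiagonal] at hq
  have hnat : q.1 e + q.2 e = d e + 1 := by
    have := congrArg (fun m : σ →₀ ℕ => m e) hq
    simpa using this
  have hc : (q.1 e : ℚ) + (q.2 e : ℚ) = (d e : ℚ) + 1 := by exact_mod_cast hnat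
  rw [← hc]; ring

lemma D_one (e : σ) : D e (1 : MvPowerSeries σ ℚ) = 0 := by
  funext d
  show ((d e : ℚ) + 1) * (1 : MvPowerSeries σ ℚ) (d + Finsupp.single e 1) = 0
  have h : (1 : MvPowerSeries σ ℚ) (d + Finsupp.single e 1)
      = if (d + Finsupp.single e 1) = 0 then 1 else 0 := MvPowerSeries.coeff_one _
  rw [h, if_neg, mul_zero]
  intro hh
  have := congrArg (fun m : σ →₀ ℕ => m e) hh
  simp at this

lemma D_X (e e' : σ) : D e (MvPowerSeries.X e' : MvPowerSeries σ ℚ)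
    = if e' = e then 1 else 0 := by
  funext d
  show ((d e : ℚ) + 1) * (MvPowerSeries.X e' : MvPowerSeries σ ℚ) (d + Finsupp.single e 1)
      = (if e' = e then (1:MvPowerSeries σ ℚ) else 0) d
  have hX : (MvPowerSeries.X e' : MvPowerSeries σ ℚ) (d + Finsupp.single e 1)
      = if d + Finsupp.single e 1 = Finsupp.single e' 1 then 1 else 0 :=
    MvPowerSeries.coeff_X _ _
  rw [hX]
  by_cases h : e' = e
  · subst h
    rw [if_pos rfl]
    have h1 : (1 : MvPowerSeries σ ℚ) d = if d = 0 then 1 else 0 := MvPowerSeries.coeff_one _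
    rw [h1]
    by_cases hd : d = 0
    · subst hd
      rw [if_pos (by simp), if_pos rfl]
      simp
    · rw [if_neg (fun hh => hd (add_right_cancel (a := d) (b := Finsupp.single e' 1) (c := 0)
        (by rw [hh, zero_add]))), if_neg hd, mul_zero]
  · rw [if_neg h]
    have hne : d + Finsupp.single e 1 ≠ Finsupp.single e' 1 := by
      intro hh
      have := congrArg (fun m : σ →₀ ℕ => m e) hh
      simp only [Finsupp.add_apply, Finsupp.single_eq_same, Finsupp.single_apply, if_neg h] at this
      omega
    rw [if_neg hne, mul_zero]
    rfl

lemma D_prod {ι : Type*} (e : σ) (s : Finset ι) (f : ι → MvPowerSeries σ ℚ) :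
    D e (∏ i ∈ s, f i) = ∑ i ∈ s, (∏ j ∈ s.erase i, f j) * D e (f i) := by
  classical
  induction s using Finset.induction_on with
  | empty => simp [D_one]
  | @insert a s ha ih =>
      rw [Finset.prod_insert ha, D_mul, ih, Finset.sum_insert ha, Finset.erase_insert ha]
      rw [Finset.mul_sum]
      congr 1
      · ring_nf
      · apply Finset.sum_congr rfl
        intro i hi
        have hne : i ≠ a := fun hia => ha (hia ▸ hi)
        rw [Finset.erase_insert_of_ne (Ne.symm hne), Finset.prod_insert (fun hc => ha (Finset.mem_of_mem_erase hc))]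
        ring
lemma eq_one_of_D_eq_zero (H : MvPowerSeries σ ℚ) (h0 : H 0 = 1)
    (hD : ∀ e, D e H = 0) : H = 1 := by
  funext d
  by_cases hd : d = 0
  · subst hd
    rw [h0]
    exact (by simp : (1:ℚ) = if (0 : σ →₀ ℕ) = 0 then (1:ℚ) else 0) ▸ (MvPowerSeries.coeff_one (0 : σ →₀ ℕ)).symm
  · obtain ⟨e, he⟩ := Finsupp.support_nonempty_iff.2 hd
    have he' : d e ≠ 0 := Finsupp.mem_support_iff.1 he
    have hle : Finsupp.single e 1 ≤ d := by rw [Finsupp.single_le_iff]; omega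
    have h := congrFun (hD e) (d - Finsupp.single e 1)
    rw [D_apply, tsub_add_cancel_of_le hle] at h
    have hco : (((d - Finsupp.single e 1 : σ →₀ ℕ) e : ℚ) + 1) ≠ 0 := by
      rw [Finsupp.tsub_apply]
      simp only [Finsupp.single_eq_same]
      push_cast [Nat.cast_sub (by omega : 1 ≤ d e)]
      intro hc
      have : (d e : ℚ) = 0 := by linarith
      exact_mod_cast he' (by exact_mod_cast this)
    have : H d = 0 := by
      rcases mul_eq_zero.1 h with h' | h'
      · exact absurd h' hco
      · exact h'
    rw [this]
    exact ((MvPowerSeries.coeff_one d).trans (if_neg hd)).symm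

variable (r : ℕ)

noncomputable def Bm : Matrix (Fin r) (Fin r) (MvPowerSeries (Fin r × Fin r) ℚ) :=
  fun i j => MvPowerSeries.X (i, j)

noncomputable def Am : Matrix (Fin r) (Fin r) (MvPowerSeries (Fin r × Fin r) ℚ) := 1 - Bm r

lemma D_entry (k l a b : Fin r) :
    D (k,l) (Am r a b) = if a = k ∧ b = l then -1 else 0 := by
  have h : Am r a b = (1 : Matrix (Fin r) (Fin r) _) a b - MvPowerSeries.X (a,b) := rfl
  rw [h, map_sub, D_X]
  have h1 : D (k,l) ((1 : Matrix (Fin r) (Fin r) (MvPowerSeries (Fin r × Fin r) ℚ)) a b) = 0 := by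
    rw [Matrix.one_apply]
    by_cases hab : a = b
    · rw [if_pos hab, D_one]
    · rw [if_neg hab, map_zero]
  rw [h1, zero_sub]
  by_cases h2 : a = k ∧ b = l
  · rw [if_pos (show ((a,b) : Fin r × Fin r) = (k,l) by rw [h2.1, h2.2]), if_pos h2]
  · rw [if_neg (fun hc : ((a,b) : Fin r × Fin r) = (k,l) => h2 (by cases hc; exact ⟨rfl, rfl⟩)),
      if_neg h2, neg_zero]

lemma D_det (k l : Fin r) :
    D (k,l) ((Am r).det) = -((Am r).adjugate l k) := by
  rw [Matrix.det_apply, map_sum]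
  have step : ∀ σ' : Equiv.Perm (Fin r),
      D (k,l) (Equiv.Perm.sign σ' • ∏ i, Am r (σ' i) i)
        = Equiv.Perm.sign σ' • (if σ' l = k then -(∏ j ∈ Finset.univ.erase l, Am r (σ' j) j) else 0) := by
    intro σ'
    rw [Units.smul_def, Units.smul_def, map_zsmul, D_prod]
    congr 1
    rw [Finset.sum_eq_single l]
    · rw [D_entry]
      by_cases h : σ' l = k
      · rw [if_pos ⟨h, rfl⟩, if_pos h, mul_neg, mul_one]
        congr!
      · rw [if_neg (fun hc => h hc.1), if_neg h, mul_zero]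
    · intro i _ hne
      rw [D_entry, if_neg (fun hc => hne hc.2), mul_zero]
    · intro hc
      exact absurd (Finset.mem_univ l) hc
  rw [Finset.sum_congr rfl (fun σ' _ => step σ')]
  rw [Matrix.adjugate_apply, Matrix.det_apply, ← Finset.sum_neg_distrib]
  apply Finset.sum_congr rfl
  intro σ' _
  have hrow : ∀ i : Fin r, ((Am r).updateRow k (Pi.single l 1)) (σ' i) i
      = if σ' i = k then (Pi.single l 1 : Fin r → MvPowerSeries (Fin r × Fin r) ℚ) i else Am r (σ' i) i := by
    intro i
    by_cases h : σ' i = k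
    · rw [if_pos h, h, Matrix.updateRow_self]
    · rw [if_neg h, Matrix.updateRow_ne h]
  have hprod : (∏ i, ((Am r).updateRow k (Pi.single l 1)) (σ' i) i)
      = if σ' l = k then ∏ j ∈ Finset.univ.erase l, Am r (σ' j) j else 0 := by
    by_cases h : σ' l = k
    · rw [if_pos h, ← Finset.mul_prod_erase Finset.univ _ (Finset.mem_univ l)]
      rw [hrow l, if_pos h, Pi.single_eq_same, one_mul]
      apply Finset.prod_congr rfl
      intro i hi
      have hil : i ≠ l := (Finset.mem_erase.1 hi).1
      rw [hrow i, if_neg (fun hc : σ' i = k => hil (σ'.injective (hc.trans h.symm)))]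
    · rw [if_neg h]
      -- the factor at i = σ'⁻¹ k vanishes... unless k not in range: σ' is a bijection so k = σ' (σ'⁻¹ k)
      apply Finset.prod_eq_zero (Finset.mem_univ (σ'.symm k))
      rw [hrow, if_pos (σ'.apply_symm_apply k), Pi.single_apply]
      rw [if_neg (fun hc : σ'.symm k = l => h (by rw [← hc, σ'.apply_symm_apply]))]
  rw [hprod]
  by_cases h : σ' l = k
  · rw [if_pos h, if_pos h, smul_neg]
  · rw [if_neg h, if_neg h]; simp
/-- multinomial addition of one to an entry -/
lemma mult_succ {α : Type*} [Fintype α] [DecidableEq α] (f : α → ℕ) (l : α) :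
    (f l + 1) * Nat.multinomial univ (Function.update f l (f l + 1))
      = ((∑ i, f i) + 1) * Nat.multinomial univ f := by
  have hP : 0 < ∏ i, (f i).factorial := Finset.prod_pos (fun i _ => Nat.factorial_pos _)
  apply Nat.eq_of_mul_eq_mul_left hP
  set g := Function.update f l (f l + 1) with hg
  have hgfact : ∏ i, (g i).factorial = (f l + 1) * ∏ i, (f i).factorial := by
    rw [← Finset.mul_prod_erase univ (fun i => (g i).factorial) (mem_univ l),
        ← Finset.mul_prod_erase univ (fun i => (f i).factorial) (mem_univ l)]
    have h1 : (g l).factorial = (f l + 1) * (f l).factorial := by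
      rw [hg, Function.update_self]; rfl
    have h2 : ∀ i ∈ univ.erase l, (g i).factorial = (f i).factorial := by
      intro i hi
      rw [hg, Function.update_of_ne (Finset.mem_erase.1 hi).1]
    rw [Finset.prod_congr rfl h2, h1]
    ring
  have hgsum : ∑ i, g i = (∑ i, f i) + 1 := by
    rw [hg, Finset.sum_update_of_mem (mem_univ l), Finset.sdiff_singleton_eq_erase,
        ← Finset.sum_erase_add univ f (mem_univ l)]
    ring
  calc (∏ i, (f i).factorial) * ((f l + 1) * Nat.multinomial univ g)
      = (f l + 1) * ((∏ i, (f i).factorial) * Nat.multinomial univ g) := by ring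
    _ = (∏ i, (g i).factorial) * Nat.multinomial univ g := by rw [hgfact]; ring
    _ = (∑ i, g i).factorial := Nat.multinomial_spec _ _
    _ = ((∑ i, f i) + 1).factorial := by rw [hgsum]
    _ = ((∑ i, f i) + 1) * (∑ i, f i).factorial := rfl
    _ = ((∑ i, f i) + 1) * ((∏ i, (f i).factorial) * Nat.multinomial univ f) := by
        rw [Nat.multinomial_spec]
    _ = (∏ i, (f i).factorial) * (((∑ i, f i) + 1) * Nat.multinomial univ f) := by ring

/-- peeling one unit off an entry -/
lemma mult_pred {α : Type*} [Fintype α] [DecidableEq α] (f : α → ℕ) (l : α) (h : f l ≠ 0) :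
    (∑ i, f i) * Nat.multinomial univ (Function.update f l (f l - 1))
      = f l * Nat.multinomial univ f := by
  set f' := Function.update f l (f l - 1) with hf'
  have h1 : f' l + 1 = f l := by rw [hf', Function.update_self]; omega
  have h2 : Function.update f' l (f' l + 1) = f := by
    funext i
    by_cases hi : i = l
    · subst hi; rw [Function.update_self, h1]
    · rw [Function.update_of_ne hi, hf', Function.update_of_ne hi]
  have h3 : (∑ i, f' i) + 1 = ∑ i, f i := by
    rw [hf', Finset.sum_update_of_mem (mem_univ l), Finset.sdiff_singleton_eq_erase,
        ← Finset.sum_erase_add univ f (mem_univ l)]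
    omega
  have := mult_succ f' l
  rw [h2, h1, h3] at this
  exact this.symm

/-- summing the peels reconstitutes the multinomial, over ℚ -/
lemma mult_peel_sum {α : Type*} [Fintype α] [DecidableEq α] (f : α → ℕ) (h : 0 < ∑ i, f i) :
    ∑ j, (if f j = 0 then (0:ℚ) else (Nat.multinomial univ (Function.update f j (f j - 1)) : ℚ))
      = (Nat.multinomial univ f : ℚ) := by
  have hn : ((∑ i, f i : ℕ) : ℚ) ≠ 0 := by positivity
  apply mul_left_cancel₀ hn
  rw [Finset.mul_sum]
  have : ∀ j, ((∑ i, f i : ℕ) : ℚ) *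
        (if f j = 0 then (0:ℚ) else (Nat.multinomial univ (Function.update f j (f j - 1)) : ℚ))
      = (f j : ℚ) * (Nat.multinomial univ f : ℚ) := by
    intro j
    by_cases hj : f j = 0
    · rw [if_pos hj, hj, mul_zero]; push_cast; ring
    · rw [if_neg hj]
      have := mult_pred f j hj
      have := congrArg (fun n : ℕ => (n : ℚ)) this
      push_cast at this
      rw [← this]
      push_cast
      ring
  rw [Finset.sum_congr rfl (fun j _ => this j), ← Finset.sum_mul]
  push_cast
  ring

variable (r : ℕ)

noncomputable def Fser : MvPowerSeries (Fin r × Fin r) ℚ := fun d =>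
  if (∀ i : Fin r, ∑ j : Fin r, d (i, j) = ∑ j : Fin r, d (j, i)) then
    ∏ i : Fin r, (Nat.multinomial Finset.univ (fun j : Fin r => d (i, j)) : ℚ)
  else 0

noncomputable def Gser (k l : Fin r) : MvPowerSeries (Fin r × Fin r) ℚ := fun d =>
  if (∀ i : Fin r, (∑ j : Fin r, d (i, j)) + (if i = k then 1 else 0)
      = (∑ j : Fin r, d (j, i)) + (if i = l then 1 else 0)) then
    ((∑ j : Fin r, d (k, j) : ℕ) + 1 : ℚ)
      * ∏ i : Fin r, (Nat.multinomial Finset.univ (fun j : Fin r => d (i, j)) : ℚ)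
  else 0

lemma D_Fser (k l : Fin r) : D ((k,l) : Fin r × Fin r) (Fser r) = Gser r k l := by
  funext d
  rw [D_apply]
  set ds := d + Finsupp.single ((k,l) : Fin r × Fin r) 1 with hds
  have happ : ∀ p : Fin r × Fin r, ds p = d p + (if ((k,l) : Fin r × Fin r) = p then 1 else 0) := by
    intro p; rw [hds, Finsupp.add_apply, Finsupp.single_apply]
  have hrow : ∀ i : Fin r, i ≠ k → (fun j => ds (i,j)) = fun j => d (i,j) := by
    intro i hi
    funext j
    rw [happ, if_neg (fun hc => hi (congrArg Prod.fst hc).symm), add_zero]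
  have hrowk : (fun j => ds (k,j)) = Function.update (fun j => d (k,j)) l (d (k,l) + 1) := by
    funext j
    rw [happ, Function.update_apply]
    by_cases hj : j = l
    · subst hj; rw [if_pos rfl, if_pos rfl]
    · rw [if_neg (fun hc => hj (congrArg Prod.snd hc).symm), if_neg hj, add_zero]
  have hrs : ∀ i : Fin r, ∑ j, ds (i,j) = (∑ j, d (i,j)) + (if i = k then 1 else 0) := by
    intro i
    have : ∀ j, ds (i,j) = d (i,j) + (if ((k,l):Fin r × Fin r) = (i,j) then 1 else 0) :=
      fun j => happ (i,j)
    rw [Finset.sum_congr rfl (fun j _ => this j), Finset.sum_add_distrib]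
    congr 1
    by_cases hik : i = k
    · subst hik
      rw [if_pos rfl]
      have : ∀ j : Fin r, (if ((i,l):Fin r × Fin r) = (i,j) then 1 else 0) = if l = j then 1 else 0 := by
        intro j
        by_cases hj : l = j
        · subst hj; rw [if_pos rfl, if_pos rfl]
        · rw [if_neg (fun hc => hj (congrArg Prod.snd hc)), if_neg hj]
      rw [Finset.sum_congr rfl (fun j _ => this j), Finset.sum_ite_eq univ l (fun _ => 1),
        if_pos (mem_univ l)]
    · rw [if_neg hik]
      apply Finset.sum_eq_zero
      intro j _
      rw [if_neg (fun hc => hik (congrArg Prod.fst hc).symm)]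
  have hcs : ∀ i : Fin r, ∑ j, ds (j,i) = (∑ j, d (j,i)) + (if i = l then 1 else 0) := by
    intro i
    have : ∀ j, ds (j,i) = d (j,i) + (if ((k,l):Fin r × Fin r) = (j,i) then 1 else 0) :=
      fun j => happ (j,i)
    rw [Finset.sum_congr rfl (fun j _ => this j), Finset.sum_add_distrib]
    congr 1
    by_cases hil : i = l
    · subst hil
      rw [if_pos rfl]
      have : ∀ j : Fin r, (if ((k,i):Fin r × Fin r) = (j,i) then 1 else 0) = if k = j then 1 else 0 := by
        intro j
        by_cases hj : k = j
        · subst hj; rw [if_pos rfl, if_pos rfl]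
        · rw [if_neg (fun hc => hj (congrArg Prod.fst hc)), if_neg hj]
      rw [Finset.sum_congr rfl (fun j _ => this j), Finset.sum_ite_eq univ k (fun _ => 1),
        if_pos (mem_univ k)]
    · rw [if_neg hil]
      apply Finset.sum_eq_zero
      intro j _
      rw [if_neg (fun hc => hil (congrArg Prod.snd hc).symm)]
  show ((d ((k,l) : Fin r × Fin r) : ℚ) + 1) * Fser r ds = Gser r k l d
  rw [Fser, Gser]
  have hcond : (∀ i : Fin r, ∑ j : Fin r, ds (i, j) = ∑ j : Fin r, ds (j, i))
      ↔ (∀ i : Fin r, (∑ j : Fin r, d (i, j)) + (if i = k then 1 else 0)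
          = (∑ j : Fin r, d (j, i)) + (if i = l then 1 else 0)) := by
    apply forall_congr'
    intro i
    rw [hrs i, hcs i]
  by_cases hc : (∀ i : Fin r, (∑ j : Fin r, d (i, j)) + (if i = k then 1 else 0)
      = (∑ j : Fin r, d (j, i)) + (if i = l then 1 else 0))
  · rw [if_pos (hcond.2 hc), if_pos hc]
    -- product manipulation
    rw [← Finset.mul_prod_erase univ
        (fun i => (Nat.multinomial Finset.univ (fun j : Fin r => ds (i, j)) : ℚ)) (mem_univ k),
      ← Finset.mul_prod_erase univ
        (fun i => (Nat.multinomial Finset.univ (fun j : Fin r => d (i, j)) : ℚ)) (mem_univ k)]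
    have herase : ∀ i ∈ univ.erase k,
        (Nat.multinomial Finset.univ (fun j : Fin r => ds (i, j)) : ℚ)
          = (Nat.multinomial Finset.univ (fun j : Fin r => d (i, j)) : ℚ) := by
      intro i hi
      rw [show (fun j => ds (i,j)) = fun j => d (i,j) from hrow i (Finset.mem_erase.1 hi).1]
    rw [Finset.prod_congr rfl herase]
    have hkey : ((d ((k,l) : Fin r × Fin r) : ℚ) + 1)
        * (Nat.multinomial Finset.univ (fun j : Fin r => ds (k, j)) : ℚ)
        = ((∑ j : Fin r, d (k, j) : ℕ) + 1 : ℚ)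
          * (Nat.multinomial Finset.univ (fun j : Fin r => d (k, j)) : ℚ) := by
      rw [show (fun j => ds (k,j)) = Function.update (fun j => d (k,j)) l (d (k,l) + 1) from hrowk]
      have := mult_succ (fun j => d (k,j)) l
      have := congrArg (fun n : ℕ => (n : ℚ)) this
      push_cast at this ⊢
      linarith [this]
    calc ((d ((k,l) : Fin r × Fin r) : ℚ) + 1)
          * ((Nat.multinomial Finset.univ (fun j : Fin r => ds (k, j)) : ℚ)
            * ∏ i ∈ univ.erase k, (Nat.multinomial Finset.univ (fun j : Fin r => d (i, j)) : ℚ))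
        = (((d ((k,l) : Fin r × Fin r) : ℚ) + 1)
            * (Nat.multinomial Finset.univ (fun j : Fin r => ds (k, j)) : ℚ))
            * ∏ i ∈ univ.erase k, (Nat.multinomial Finset.univ (fun j : Fin r => d (i, j)) : ℚ) := by
          ring
      _ = _ := by rw [hkey]; ring
  · rw [if_neg (fun hh => hc (hcond.1 hh)), if_neg hc, mul_zero]

namespace Part2
open MvPowerSeries

lemma X_mul_coeff {σ : Type*} (e : σ) (φ : MvPowerSeries σ ℚ) (d : σ →₀ ℕ) :
    (MvPowerSeries.X e * φ : MvPowerSeries σ ℚ) d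
      = if d e = 0 then 0 else φ (d - Finsupp.single e 1) := by
  have h : (MvPowerSeries.X e * φ : MvPowerSeries σ ℚ) d
      = ∑ p ∈ antidiagonal d, (MvPowerSeries.X e : MvPowerSeries σ ℚ) p.1 * φ p.2 :=
    MvPowerSeries.coeff_mul _ _ _
  have hX : ∀ p : (σ →₀ ℕ) × (σ →₀ ℕ), (MvPowerSeries.X e : MvPowerSeries σ ℚ) p.1
      = if p.1 = Finsupp.single e 1 then 1 else 0 := fun p => MvPowerSeries.coeff_X _ _
  rw [h]
  by_cases hd : d e = 0
  · rw [if_pos hd]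
    apply Finset.sum_eq_zero
    intro p hp
    rw [HasAntidiagonal.mem_antidiagonal] at hp
    rw [hX p]
    by_cases h1 : p.1 = Finsupp.single e 1
    · exfalso
      have := congrArg (fun m : σ →₀ ℕ => m e) hp
      simp only [Finsupp.add_apply] at this
      rw [h1] at this
      simp [Finsupp.single_eq_same, hd] at this
    · rw [if_neg h1, zero_mul]
  · rw [if_neg hd]
    have hle : Finsupp.single e 1 ≤ d := by rw [Finsupp.single_le_iff]; omega
    rw [Finset.sum_eq_single ((Finsupp.single e 1 : σ →₀ ℕ), d - Finsupp.single e 1)]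
    · rw [hX, if_pos rfl, one_mul]
    · intro p hp hne
      rw [HasAntidiagonal.mem_antidiagonal] at hp
      rw [hX p]
      by_cases h1 : p.1 = Finsupp.single e 1
      · exfalso
        apply hne
        have hp2 : p.2 = d - Finsupp.single e 1 := by
          rw [← hp, h1]
          rw [add_comm]
          exact (by simp : p.2 + Finsupp.single e 1 - Finsupp.single e 1 = p.2).symm
        exact Prod.ext h1 hp2
      · rw [if_neg h1, zero_mul]
    · intro hmem
      exfalso
      apply hmem
      rw [HasAntidiagonal.mem_antidiagonal]
      rw [add_comm]
      exact tsub_add_cancel_of_le hle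

end Part2

lemma sub_single_apply {σ : Type*} (d : σ →₀ ℕ) (e p : σ) :
    (d - Finsupp.single e 1 : σ →₀ ℕ) p = d p - (if e = p then 1 else 0) := by
  rw [Finsupp.tsub_apply, Finsupp.single_apply]

lemma rs_sub (d : (Fin r × Fin r) →₀ ℕ) (l j₀ : Fin r) (h : d (l,j₀) ≠ 0) (i : Fin r) :
    (∑ j', ((d - Finsupp.single ((l,j₀) : Fin r × Fin r) 1 : (Fin r × Fin r) →₀ ℕ)) (i,j')) + (if i = l then 1 else 0)
      = ∑ j', d (i,j') := by
  by_cases hil : i = l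
  · subst hil
    rw [if_pos rfl]
    rw [← Finset.sum_erase_add univ (fun j' => ((d - Finsupp.single ((i,j₀) : Fin r × Fin r) 1 : (Fin r × Fin r) →₀ ℕ)) (i,j')) (mem_univ j₀),
        ← Finset.sum_erase_add univ (fun j' => d (i,j')) (mem_univ j₀)]
    have h1 : ∀ j' ∈ univ.erase j₀,
        ((d - Finsupp.single ((i,j₀) : Fin r × Fin r) 1 : (Fin r × Fin r) →₀ ℕ)) (i,j') = d (i,j') := by
      intro j' hj'
      rw [sub_single_apply, if_neg (fun hc => (Finset.mem_erase.1 hj').1 (congrArg Prod.snd hc).symm), Nat.sub_zero]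
    rw [Finset.sum_congr rfl h1]
    have h2 : ((d - Finsupp.single ((i,j₀) : Fin r × Fin r) 1 : (Fin r × Fin r) →₀ ℕ)) (i,j₀) = d (i,j₀) - 1 := by
      rw [sub_single_apply, if_pos rfl]
    rw [h2]
    omega
  · rw [if_neg hil, add_zero]
    apply Finset.sum_congr rfl
    intro j' _
    rw [sub_single_apply, if_neg (fun hc => hil (congrArg Prod.fst hc).symm), Nat.sub_zero]

lemma cs_sub (d : (Fin r × Fin r) →₀ ℕ) (l j₀ : Fin r) (h : d (l,j₀) ≠ 0) (i : Fin r) :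
    (∑ j', ((d - Finsupp.single ((l,j₀) : Fin r × Fin r) 1 : (Fin r × Fin r) →₀ ℕ)) (j',i)) + (if i = j₀ then 1 else 0)
      = ∑ j', d (j',i) := by
  by_cases hij : i = j₀
  · subst hij
    rw [if_pos rfl]
    rw [← Finset.sum_erase_add univ (fun j' => ((d - Finsupp.single ((l,i) : Fin r × Fin r) 1 : (Fin r × Fin r) →₀ ℕ)) (j',i)) (mem_univ l),
        ← Finset.sum_erase_add univ (fun j' => d (j',i)) (mem_univ l)]
    have h1 : ∀ j' ∈ univ.erase l,
        ((d - Finsupp.single ((l,i) : Fin r × Fin r) 1 : (Fin r × Fin r) →₀ ℕ)) (j',i) = d (j',i) := by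
      intro j' hj'
      rw [sub_single_apply, if_neg (fun hc => (Finset.mem_erase.1 hj').1 (congrArg Prod.fst hc).symm), Nat.sub_zero]
    rw [Finset.sum_congr rfl h1]
    have h2 : ((d - Finsupp.single ((l,i) : Fin r × Fin r) 1 : (Fin r × Fin r) →₀ ℕ)) (l,i) = d (l,i) - 1 := by
      rw [sub_single_apply, if_pos rfl]
    rw [h2]
    omega
  · rw [if_neg hij, add_zero]
    apply Finset.sum_congr rfl
    intro j' _
    rw [sub_single_apply, if_neg (fun hc => hij (congrArg Prod.snd hc).symm), Nat.sub_zero]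

lemma row_sub_ne (d : (Fin r × Fin r) →₀ ℕ) (l j₀ : Fin r) (i : Fin r) (hil : i ≠ l) :
    (fun j' => ((d - Finsupp.single ((l,j₀) : Fin r × Fin r) 1 : (Fin r × Fin r) →₀ ℕ)) (i,j')) = fun j' => d (i,j') := by
  funext j'
  rw [sub_single_apply, if_neg (fun hc => hil (congrArg Prod.fst hc).symm), Nat.sub_zero]

lemma row_sub_eq (d : (Fin r × Fin r) →₀ ℕ) (l j₀ : Fin r) :
    (fun j' => ((d - Finsupp.single ((l,j₀) : Fin r × Fin r) 1 : (Fin r × Fin r) →₀ ℕ)) (l,j'))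
      = Function.update (fun j' => d (l,j')) j₀ (d (l,j₀) - 1) := by
  funext j'
  rw [sub_single_apply, Function.update_apply]
  by_cases hj : j' = j₀
  · subst hj; rw [if_pos rfl, if_pos rfl]
  · rw [if_neg (fun hc => hj (congrArg Prod.snd hc).symm), if_neg hj, Nat.sub_zero]

lemma Gser_apply (k a : Fin r) (m : (Fin r × Fin r) →₀ ℕ) :
    Gser r k a m = if (∀ i : Fin r, (∑ j : Fin r, m (i, j)) + (if i = k then 1 else 0)
      = (∑ j : Fin r, m (j, i)) + (if i = a then 1 else 0)) then
    ((∑ j : Fin r, m (k, j) : ℕ) + 1 : ℚ)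
      * ∏ i : Fin r, (Nat.multinomial Finset.univ (fun j : Fin r => m (i, j)) : ℚ)
  else 0 := rfl

lemma Fser_apply (m : (Fin r × Fin r) →₀ ℕ) :
    Fser r m = if (∀ i : Fin r, ∑ j : Fin r, m (i, j) = ∑ j : Fin r, m (j, i)) then
    ∏ i : Fin r, (Nat.multinomial Finset.univ (fun j : Fin r => m (i, j)) : ℚ)
  else 0 := rfl

lemma Gser_rec (k l : Fin r) :
    Gser r k l = (∑ j : Fin r, MvPowerSeries.X ((l,j) : Fin r × Fin r) * Gser r k j)
      + (if l = k then Fser r else 0) := by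
  funext d
  have hRHS : ((∑ j : Fin r, MvPowerSeries.X ((l,j) : Fin r × Fin r) * Gser r k j)
      + (if l = k then Fser r else 0) : MvPowerSeries (Fin r × Fin r) ℚ) d
      = (∑ j : Fin r, (if d (l,j) = 0 then (0:ℚ)
          else Gser r k j (d - Finsupp.single ((l,j) : Fin r × Fin r) 1)))
        + (if l = k then Fser r d else 0) := by
    have h1 : ((∑ j : Fin r, MvPowerSeries.X ((l,j) : Fin r × Fin r) * Gser r k j) : MvPowerSeries (Fin r × Fin r) ℚ) d
        = ∑ j : Fin r, (MvPowerSeries.X ((l,j) : Fin r × Fin r) * Gser r k j : MvPowerSeries (Fin r × Fin r) ℚ) d := by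
      exact map_sum (MvPowerSeries.coeff d) (fun j => MvPowerSeries.X ((l,j) : Fin r × Fin r) * Gser r k j) univ
    have h2 : ((if l = k then Fser r else 0) : MvPowerSeries (Fin r × Fin r) ℚ) d
        = if l = k then Fser r d else 0 := by split_ifs <;> rfl
    show ((∑ j : Fin r, MvPowerSeries.X ((l,j) : Fin r × Fin r) * Gser r k j) : MvPowerSeries (Fin r × Fin r) ℚ) d
        + ((if l = k then Fser r else 0) : MvPowerSeries (Fin r × Fin r) ℚ) d = _
    rw [h1, h2]
    congr 1
    apply Finset.sum_congr rfl
    intro j _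
    exact Part2.X_mul_coeff _ _ _
  rw [hRHS]
  have hiff : ∀ j : Fin r, d (l,j) ≠ 0 →
      ((∀ i : Fin r, (∑ j' : Fin r, (d - Finsupp.single ((l,j) : Fin r × Fin r) 1 : (Fin r × Fin r) →₀ ℕ) (i, j')) + (if i = k then 1 else 0)
        = (∑ j' : Fin r, (d - Finsupp.single ((l,j) : Fin r × Fin r) 1 : (Fin r × Fin r) →₀ ℕ) (j', i)) + (if i = j then 1 else 0))
      ↔ (∀ i : Fin r, (∑ j' : Fin r, d (i,j')) + (if i = k then 1 else 0)
        = (∑ j' : Fin r, d (j',i)) + (if i = l then 1 else 0))) := by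
    intro j hj
    apply forall_congr'
    intro i
    have h1 := rs_sub r d l j hj i
    have h2 := cs_sub r d l j hj i
    split_ifs at h1 h2 ⊢ <;> omega
  by_cases hc : ∀ i : Fin r, (∑ j' : Fin r, d (i,j')) + (if i = k then 1 else 0)
      = (∑ j' : Fin r, d (j',i)) + (if i = l then 1 else 0)
  · -- main case
    rw [Gser_apply, if_pos hc]
    have hprod' : ∀ j : Fin r, d (l,j) ≠ 0 →
        (∏ i : Fin r, (Nat.multinomial Finset.univ
            (fun j' : Fin r => (d - Finsupp.single ((l,j) : Fin r × Fin r) 1 : (Fin r × Fin r) →₀ ℕ) (i, j')) : ℚ))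
        = (Nat.multinomial Finset.univ
              (Function.update (fun j' : Fin r => d (l,j')) j (d (l,j) - 1)) : ℚ)
          * ∏ i ∈ univ.erase l, (Nat.multinomial Finset.univ (fun j' : Fin r => d (i, j')) : ℚ) := by
      intro j hj
      rw [← Finset.mul_prod_erase univ _ (mem_univ l), row_sub_eq]
      congr 1
      apply Finset.prod_congr rfl
      intro i hi
      rw [row_sub_ne r d l j i (Finset.mem_erase.1 hi).1]
    by_cases hlk : l = k
    · -- l = k
      subst hlk
      rw [if_pos rfl]
      have hflow : Fser r d = ∏ i : Fin r, (Nat.multinomial Finset.univ (fun j : Fin r => d (i, j)) : ℚ) := by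
        rw [Fser_apply, if_pos]
        intro i
        have := hc i
        omega
      rw [hflow]
      by_cases hn : ∑ j' : Fin r, d (l,j') = 0
      · have hz : ∀ j : Fin r, d (l,j) = 0 := by
          intro j
          have := Finset.sum_eq_zero_iff.1 hn j (mem_univ j)
          exact this
        rw [Finset.sum_congr rfl (fun j _ => if_pos (hz j)), Finset.sum_const_zero, zero_add, hn]
        push_cast
        ring
      · have hpos : 0 < ∑ j' : Fin r, d (l,j') := Nat.pos_of_ne_zero hn
        have hterm : ∀ j : Fin r, (if d (l,j) = 0 then (0:ℚ)
            else Gser r l j (d - Finsupp.single ((l,j) : Fin r × Fin r) 1))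
          = ((∑ j' : Fin r, d (l,j') : ℕ) : ℚ)
            * (∏ i ∈ univ.erase l, (Nat.multinomial Finset.univ (fun j' : Fin r => d (i, j')) : ℚ))
            * (if d (l,j) = 0 then (0:ℚ) else (Nat.multinomial Finset.univ
                (Function.update (fun j' : Fin r => d (l,j')) j (d (l,j) - 1)) : ℚ)) := by
          intro j
          by_cases hj : d (l,j) = 0
          · rw [if_pos hj, if_pos hj, mul_zero]
          · rw [if_neg hj, if_neg hj, Gser_apply, if_pos ((hiff j hj).2 hc), hprod' j hj]
            have hrs := rs_sub r d l j hj l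
            rw [if_pos rfl] at hrs
            have : ((∑ j' : Fin r, (d - Finsupp.single ((l,j) : Fin r × Fin r) 1 : (Fin r × Fin r) →₀ ℕ) (l, j') : ℕ) + 1 : ℚ)
                = ((∑ j' : Fin r, d (l,j') : ℕ) : ℚ) := by
              exact_mod_cast congrArg (fun n : ℕ => (n : ℚ)) hrs
            rw [this]
            ring
        rw [Finset.sum_congr rfl (fun j _ => hterm j), ← Finset.mul_sum,
          mult_peel_sum (fun j' => d (l,j')) hpos,
          ← Finset.mul_prod_erase univ (fun i => (Nat.multinomial Finset.univ (fun j : Fin r => d (i, j)) : ℚ)) (mem_univ l)]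
        push_cast
        ring
    · -- l ≠ k
      rw [if_neg hlk, add_zero]
      have hposl : 0 < ∑ j' : Fin r, d (l,j') := by
        have := hc l
        rw [if_neg hlk, if_pos rfl] at this
        omega
      have hterm : ∀ j : Fin r, (if d (l,j) = 0 then (0:ℚ)
          else Gser r k j (d - Finsupp.single ((l,j) : Fin r × Fin r) 1))
        = (((∑ j' : Fin r, d (k,j') : ℕ) : ℚ) + 1)
          * (∏ i ∈ univ.erase l, (Nat.multinomial Finset.univ (fun j' : Fin r => d (i, j')) : ℚ))
          * (if d (l,j) = 0 then (0:ℚ) else (Nat.multinomial Finset.univ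
              (Function.update (fun j' : Fin r => d (l,j')) j (d (l,j) - 1)) : ℚ)) := by
        intro j
        by_cases hj : d (l,j) = 0
        · rw [if_pos hj, if_pos hj, mul_zero]
        · rw [if_neg hj, if_neg hj, Gser_apply, if_pos ((hiff j hj).2 hc), hprod' j hj]
          have hrs := rs_sub r d l j hj k
          rw [if_neg (fun h : k = l => hlk h.symm), add_zero] at hrs
          have : ((∑ j' : Fin r, (d - Finsupp.single ((l,j) : Fin r × Fin r) 1 : (Fin r × Fin r) →₀ ℕ) (k, j') : ℕ) : ℚ)
              = ((∑ j' : Fin r, d (k,j') : ℕ) : ℚ) := by exact_mod_cast congrArg (fun n : ℕ => (n : ℚ)) hrs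
          rw [this]
          ring
      rw [Finset.sum_congr rfl (fun j _ => hterm j), ← Finset.mul_sum,
        mult_peel_sum (fun j' => d (l,j')) hposl,
        ← Finset.mul_prod_erase univ (fun i => (Nat.multinomial Finset.univ (fun j : Fin r => d (i, j)) : ℚ)) (mem_univ l)]
      push_cast
      ring
  · -- condition fails : everything is zero
    rw [Gser_apply, if_neg hc]
    symm
    have hz1 : ∀ j : Fin r, (if d (l,j) = 0 then (0:ℚ)
        else Gser r k j (d - Finsupp.single ((l,j) : Fin r × Fin r) 1)) = 0 := by
      intro j
      by_cases hj : d (l,j) = 0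
      · rw [if_pos hj]
      · rw [if_neg hj, Gser_apply, if_neg (fun hcc => hc ((hiff j hj).1 hcc))]
    rw [Finset.sum_congr rfl (fun j _ => hz1 j), Finset.sum_const_zero, zero_add]
    by_cases hlk : l = k
    · rw [if_pos hlk, Fser_apply, if_neg]
      intro hcc
      apply hc
      intro i
      subst hlk
      rw [hcc i]
    · rw [if_neg hlk]


noncomputable def Nmat : Matrix (Fin r) (Fin r) (MvPowerSeries (Fin r × Fin r) ℚ) :=
  fun a b => Gser r b a

lemma AN_eq : Am r * Nmat r = Fser r • (1 : Matrix (Fin r) (Fin r) (MvPowerSeries (Fin r × Fin r) ℚ)) := by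
  ext l k
  rw [Matrix.mul_apply]
  have h1 : ∀ j : Fin r, Am r l j * Nmat r j k
      = (if l = j then (1 : MvPowerSeries (Fin r × Fin r) ℚ) else 0) * Gser r k j
        - MvPowerSeries.X ((l,j) : Fin r × Fin r) * Gser r k j := by
    intro j
    have hA : Am r l j = (if l = j then (1 : MvPowerSeries (Fin r × Fin r) ℚ) else 0)
        - MvPowerSeries.X ((l,j) : Fin r × Fin r) := by
      have : Am r l j = (1 : Matrix (Fin r) (Fin r) (MvPowerSeries (Fin r × Fin r) ℚ)) l j
          - MvPowerSeries.X ((l,j) : Fin r × Fin r) := rfl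
      rw [this, Matrix.one_apply]
    rw [hA, sub_mul]
    rfl
  rw [Finset.sum_congr rfl (fun j _ => h1 j), Finset.sum_sub_distrib]
  have h2 : ∑ j : Fin r, (if l = j then (1 : MvPowerSeries (Fin r × Fin r) ℚ) else 0) * Gser r k j
      = Gser r k l := by
    have : ∀ j : Fin r, (if l = j then (1 : MvPowerSeries (Fin r × Fin r) ℚ) else 0) * Gser r k j
        = if l = j then Gser r k j else 0 := by
      intro j
      split_ifs <;> simp
    rw [Finset.sum_congr rfl (fun j _ => this j), Finset.sum_ite_eq univ l (fun j => Gser r k j),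
      if_pos (mem_univ l)]
  rw [h2, Gser_rec r k l, add_sub_cancel_left]
  rw [Matrix.smul_apply, Matrix.one_apply]
  split_ifs <;> simp

lemma det_G (k l : Fin r) :
    (Am r).det * Gser r k l = Fser r * (Am r).adjugate l k := by
  have h1 : (Am r).adjugate * (Am r * Nmat r) = (Am r).adjugate * (Fser r • 1) := by
    rw [AN_eq]
  rw [← Matrix.mul_assoc, Matrix.adjugate_mul, Matrix.smul_mul, Matrix.one_mul,
    Matrix.mul_smul, Matrix.mul_one] at h1
  have h2 := congrFun (congrFun (congrArg (fun M : Matrix (Fin r) (Fin r) (MvPowerSeries (Fin r × Fin r) ℚ) => (M : Matrix _ _ _)) h1) l) k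
  simp only [Matrix.smul_apply, smul_eq_mul] at h2
  exact h2

theorem det_mul_Fser : (Am r).det * Fser r = 1 := by
  apply eq_one_of_D_eq_zero
  · -- constant coefficient is 1
    have h1 : ((Am r).det * Fser r) 0
        = (MvPowerSeries.constantCoeff (σ := Fin r × Fin r) (R := ℚ)) ((Am r).det * Fser r) := by
      rw [← MvPowerSeries.coeff_zero_eq_constantCoeff]; rfl
    rw [h1, map_mul]
    have h2 : (MvPowerSeries.constantCoeff (σ := Fin r × Fin r) (R := ℚ)) (Am r).det = 1 := by
      rw [RingHom.map_det]
      have h3 : (MvPowerSeries.constantCoeff (σ := Fin r × Fin r) (R := ℚ)).mapMatrix (Am r) = 1 := by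
        ext a b
        rw [RingHom.mapMatrix_apply, Matrix.map_apply]
        have hA : Am r a b = (1 : Matrix (Fin r) (Fin r) (MvPowerSeries (Fin r × Fin r) ℚ)) a b
            - MvPowerSeries.X ((a,b) : Fin r × Fin r) := rfl
        rw [hA, map_sub, MvPowerSeries.constantCoeff_X, Matrix.one_apply]
        by_cases hab : a = b
        · rw [if_pos hab, map_one, Matrix.one_apply, if_pos hab]; ring
        · rw [if_neg hab, map_zero, Matrix.one_apply, if_neg hab]; ring
      rw [h3, Matrix.det_one]
    have h4 : (MvPowerSeries.constantCoeff (σ := Fin r × Fin r) (R := ℚ)) (Fser r) = 1 := by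
      have h5 : (MvPowerSeries.constantCoeff (σ := Fin r × Fin r) (R := ℚ)) (Fser r) = Fser r 0 := by
        rw [← MvPowerSeries.coeff_zero_eq_constantCoeff]; rfl
      rw [h5, Fser_apply]
      split_ifs with hcnd
      · apply Finset.prod_eq_one
        intro i _
        have h6 : (fun j : Fin r => (0 : (Fin r × Fin r) →₀ ℕ) (i,j)) = fun _ => 0 := rfl
        rw [h6]
        norm_cast
        have h7 := Nat.multinomial_spec (univ : Finset (Fin r)) (fun _ => 0)
        simp at h7
        exact h7
      · exact absurd (fun i => rfl) hcnd
    rw [h2, h4, one_mul]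
  · intro e
    obtain ⟨k, l⟩ := e
    rw [D_mul, D_det, D_Fser, det_G r k l]
    funext m
    show (-(Am r).adjugate l k * Fser r) m + (Fser r * (Am r).adjugate l k) m = (0 : MvPowerSeries (Fin r × Fin r) ℚ) m
    have : (-(Am r).adjugate l k * Fser r) + (Fser r * (Am r).adjugate l k) = 0 := by ring
    rw [← this]
    rfl
end FZ

/-- Foata–Zeilberger: for the generic `r × r` matrix `B = (b_{ij})` of formal variables,
`1/det(I - B)` is the sum over all nonnegative-integer flows `f` on the complete digraph
on `r` vertices of `β(f)·mult(f)`, where `β(f) = ∏_e b_e^{f(e)}` and `mult(f)` is the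
product over vertices of the multinomial coefficients of the outgoing values of `f`.
Equivalently, the formal power series whose coefficient at a monomial `d` is `mult(d)`
if `d` is a flow and `0` otherwise is the inverse of `det(I - B)`. -/
theorem foata_zeilberger_det_inverse_eq_sum_over_flows (r : ℕ) :
    let B : Matrix (Fin r) (Fin r) (MvPowerSeries (Fin r × Fin r) ℚ) :=
      fun i j => MvPowerSeries.X (i, j)
    let flowSum : MvPowerSeries (Fin r × Fin r) ℚ :=
      fun d => if (∀ i : Fin r, ∑ j : Fin r, d (i, j) = ∑ j : Fin r, d (j, i)) then
        ∏ i : Fin r, (Nat.multinomial Finset.univ (fun j : Fin r => d (i, j)) : ℚ)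
      else 0
    Matrix.det (1 - B) * flowSum = 1 := by
  intro B flowSum
  exact FZ.det_mul_Fser r
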